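/- Suppose the cocycle (ψ,ϑ) is σ-periodic and (H1), (H2) with j = 1 and (H3) hold. Let u(t) := ψ^t(q,u₀), t ≥ 0, be a semi-trajectory that remains in a compact subset K ⊂ H for all t ≥ 0. Then u(t) − u(t + σ) → 0 as t → +∞. -/

import Mathlib

open MeasureTheory Set Bornology Filter Topology RealInnerProductSpace

noncomputable section

variable {Q H : Type*}

section Defs
variable [MetricSpace Q] [NormedAddCommGroup H] [InnerProductSpace ℝ H] [CompleteSpace H]

def IsFlow (ϑ : ℝ → Q → Q) : Prop :=
  (∀ q, ϑ 0 q = q) ∧ (∀ t s q, ϑ (t + s) q = ϑ t (ϑ s q)) ∧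
    Continuous fun p : ℝ × Q => ϑ p.1 p.2

def IsCocycle (ϑ : ℝ → Q → Q) (ψ : ℝ → Q → H → H) : Prop :=
  (∀ q u, ψ 0 q u = u) ∧
  (∀ t s : ℝ, 0 ≤ t → 0 ≤ s → ∀ q u, ψ (t + s) q u = ψ t (ϑ s q) (ψ s q u)) ∧
  ContinuousOn (fun p : ℝ × Q × H => ψ p.1 p.2.1 p.2.2) {p : ℝ × Q × H | 0 ≤ p.1}

def IsCompleteTraj (ϑ : ℝ → Q → Q) (ψ : ℝ → Q → H → H) (q : Q) (u : ℝ → H) : Prop :=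
  Continuous u ∧ ∀ t s : ℝ, 0 ≤ t → u (t + s) = ψ t (ϑ s q) (u s)

def IsAmenable (ν : ℝ) (u : ℝ → H) : Prop :=
  IntegrableOn (fun s : ℝ => Real.exp (2 * ν * s) * ‖u s‖ ^ 2) (Set.Iic (0:ℝ))

def amenSet (ϑ : ℝ → Q → Q) (ψ : ℝ → Q → H → H) (ν : ℝ) (q : Q) : Set H :=
  {u₀ | ∃ u : ℝ → H, IsCompleteTraj ϑ ψ q u ∧ IsAmenable ν u ∧ u 0 = u₀}

structure HypH1 (P : H →L[ℝ] H) (Hplus Hminus : Submodule ℝ H) : Prop where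
  selfAdj : IsSelfAdjoint P
  closed_plus : IsClosed (Hplus : Set H)
  orth : Hminus = Hplusᗮ
  inv_plus : ∀ u ∈ Hplus, P u ∈ Hplus
  inv_minus : ∀ u ∈ Hminus, P u ∈ Hminus
  pos : ∀ u ∈ Hplus, u ≠ 0 → (0:ℝ) < ⟪P u, u⟫
  neg : ∀ u ∈ Hminus, u ≠ 0 → ⟪P u, u⟫ < 0

def HypH2 (Hminus : Submodule ℝ H) (j : ℕ) : Prop :=
  FiniteDimensional ℝ Hminus ∧ Module.finrank ℝ Hminus = j

def HypH3 (ψ : ℝ → Q → H → H) (P : H →L[ℝ] H) (δ ν : ℝ) : Prop :=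
  0 < δ ∧ 0 < ν ∧ ∀ (q : Q) (u v : H) (l r : ℝ), 0 ≤ l → l ≤ r →
    Real.exp (2 * ν * r) * ⟪P (ψ r q u - ψ r q v), ψ r q u - ψ r q v⟫ -
      Real.exp (2 * ν * l) * ⟪P (ψ l q u - ψ l q v), ψ l q u - ψ l q v⟫ ≤
      -δ * ∫ s in l..r, Real.exp (2 * ν * s) * ‖ψ s q u - ψ s q v‖ ^ 2

def IsOrthProjOnto (Hminus : Submodule ℝ H) (Pi : H →L[ℝ] H) : Prop :=
  (∀ u, Pi u ∈ Hminus) ∧ ∀ u, u - Pi u ∈ Hminusᗮ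

def HypCOM2 (ψ : ℝ → Q → H → H) : Prop :=
  ∃ tc : ℝ, 0 < tc ∧ ∀ (q : Q) (s : Set H), IsBounded s → IsCompact (closure (ψ tc q '' s))

def HypCOM3 (ψ : ℝ → Q → H → H) : Prop :=
  ∀ (q : Q) (u₀ : H), IsBounded ((fun t => ψ t q u₀) '' Set.Ici (0:ℝ)) →
    IsCompact (closure ((fun t => ψ t q u₀) '' Set.Ici (0:ℝ)))

def LyapunovStable (ψ : ℝ → Q → H → H) (q : Q) (v : ℝ → H) : Prop :=
  ∀ ε > 0, ∃ η > 0, ∀ u₀ : H, ‖u₀ - v 0‖ < η → ∀ t ≥ 0, ‖ψ t q u₀ - v t‖ < ε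

end Defs

def circleFlow (σ : ℝ) : ℝ → AddCircle σ → AddCircle σ := fun t θ => θ + (t : AddCircle σ)

set_option maxHeartbeats 1000000 in
private lemma aux_tendsto_zero (a : ℝ) (h : ℝ → ℝ)
    (hcont : ContinuousOn h (Ici a))
    (hnn : ∀ t, a ≤ t → 0 ≤ h t)
    (C : ℝ) (hbd : ∀ T, a ≤ T → (∫ s in a..T, h s) ≤ C)
    (hunif : ∀ ε > 0, ∃ η > 0, ∀ t, a ≤ t → ∀ s ∈ Icc (0:ℝ) η, h t - ε ≤ h (t + s)) :
    Tendsto h atTop (𝓝 0) := by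
  have hInt : ∀ x y, a ≤ x → a ≤ y → IntervalIntegrable h volume x y := by
    intro x y hx hy
    apply (hcont.mono ?_).intervalIntegrable
    intro z hz
    exact le_trans (le_min hx hy) hz.1
  set F : ℝ → ℝ := fun T => ∫ s in a..T, h s with hF
  have hFadd : ∀ x y, a ≤ x → a ≤ y → F x + ∫ s in x..y, h s = F y := by
    intro x y hx hy
    exact intervalIntegral.integral_add_adjacent_intervals (hInt a x le_rfl hx) (hInt x y hx hy)
  have hFmono : ∀ x y, a ≤ x → x ≤ y → F x ≤ F y := by
    intro x y hx hxy
    have hy : a ≤ y := hx.trans hxy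
    have h0 : 0 ≤ ∫ s in x..y, h s :=
      intervalIntegral.integral_nonneg hxy (fun u hu => hnn u (hx.trans hu.1))
    linarith [hFadd x y hx hy]
  have hne : (F '' Ici a).Nonempty := ⟨F a, ⟨a, mem_Ici.mpr le_rfl, rfl⟩⟩
  have hbdd : BddAbove (F '' Ici a) := ⟨C, by rintro _ ⟨T, hT, rfl⟩; exact hbd T hT⟩
  set L := sSup (F '' Ici a) with hLdef
  rw [Metric.tendsto_atTop]
  intro ε hε
  obtain ⟨η, hη, hu⟩ := hunif (ε/2) (by positivity)
  have hε' : 0 < η * (ε/2) := by positivity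
  obtain ⟨_, ⟨T₀, hT₀, rfl⟩, hFT₀⟩ := exists_lt_of_lt_csSup hne
    (show L - η*(ε/2) < L by linarith)
  refine ⟨max T₀ a, fun t ht => ?_⟩
  have hta : a ≤ t := le_trans (le_max_right _ _) ht
  have htT₀ : T₀ ≤ t := le_trans (le_max_left _ _) ht
  have hIt : ∫ s in t..(t+η), h s < η * (ε/2) := by
    have h1 := hFadd t (t+η) hta (by linarith)
    have h2 : F (t+η) ≤ L := le_csSup hbdd ⟨t+η, ⟨by simp; linarith, rfl⟩⟩
    have h3 : F T₀ ≤ F t := hFmono T₀ t hT₀ htT₀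
    linarith
  have hnnt := hnn t hta
  rw [Real.dist_eq, abs_of_nonneg (by linarith)]
  by_contra hcon
  push_neg at hcon
  have hge : ε ≤ h t := by linarith
  have hlow : ∀ x ∈ Icc t (t+η), ε/2 ≤ h x := by
    intro x hx
    have hmem : x - t ∈ Icc (0:ℝ) η := ⟨by linarith [hx.1], by linarith [hx.2]⟩
    have := hu t hta (x - t) hmem
    have hxx : t + (x - t) = x := by ring
    rw [hxx] at this
    linarith
  have hcomp : ∫ s in t..(t+η), (ε/2) ≤ ∫ s in t..(t+η), h s := by
    apply intervalIntegral.integral_mono_on (by linarith) intervalIntegrable_const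
      (hInt t (t+η) hta (by linarith))
    exact hlow
  rw [intervalIntegral.integral_const] at hcomp
  simp only [smul_eq_mul] at hcomp
  have : (t + η - t) * (ε/2) = η * (ε/2) := by ring
  linarith [hcomp, this]


set_option maxHeartbeats 1000000 in
/-- Lemma 5, item 3: for a σ-periodic cocycle under (H1), (H2) with `j = 1` and (H3),
any semi-trajectory remaining in a compact set satisfies `u(t) − u(t+σ) → 0` as
`t → +∞`. -/
theorem asymptotic_sigma_periodicity
    {H : Type*} [NormedAddCommGroup H] [InnerProductSpace ℝ H]
    [CompleteSpace H] [TopologicalSpace.SeparableSpace H]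
    (σ : ℝ) (hσ : 0 < σ)
    (ψ : ℝ → AddCircle σ → H → H)
    (hcoc : IsCocycle (circleFlow σ) ψ)
    (P : H →L[ℝ] H) (Hplus Hminus : Submodule ℝ H)
    (h1 : HypH1 P Hplus Hminus)
    (h2 : HypH2 Hminus 1)
    (δ ν : ℝ) (h3 : HypH3 ψ P δ ν)
    (q : AddCircle σ) (u₀ : H) (K : Set H) (hK : IsCompact K)
    (hKmem : ∀ t : ℝ, 0 ≤ t → ψ t q u₀ ∈ K) :
    Tendsto (fun t : ℝ => ψ t q u₀ - ψ (t + σ) q u₀) atTop (𝓝 0) := by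
  haveI : Fact (0 < σ) := ⟨hσ⟩
  obtain ⟨hψ0, hcocycle', hcont⟩ := hcoc
  have hcocycle : ∀ t s : ℝ, 0 ≤ t → 0 ≤ s → ∀ (qq : AddCircle σ) (uu : H),
      ψ (t + s) qq uu = ψ t (qq + (s : AddCircle σ)) (ψ s qq uu) := hcocycle'
  have h1closed : IsClosed (Hplus : Set H) := h1.closed_plus
  have h1orth : Hminus = Hplusᗮ := h1.orth
  have h1pos : ∀ u ∈ Hplus, u ≠ 0 → (0:ℝ) < ⟪P u, u⟫ := h1.pos
  obtain ⟨hfd, hrank⟩ := h2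
  haveI : FiniteDimensional ℝ Hminus := hfd
  obtain ⟨hδ, hν, h3'⟩ := h3

  set v := ψ σ q u₀ with hv
  have key : ∀ s, 0 ≤ s → ψ (s + σ) q u₀ = ψ s q v := by
    intro s hs
    rw [hcocycle s σ hs hσ.le q u₀]
    simp [AddCircle.coe_period]
    rfl
  set w : ℝ → H := fun s => ψ s q u₀ - ψ s q v with hw
  have hvK : ∀ s, 0 ≤ s → ψ s q v ∈ K := by
    intro s hs
    rw [← key s hs]; exact hKmem _ (by linarith)
  have contTraj : ∀ x : H, ContinuousOn (fun t => ψ t q x) (Ici 0) := by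
    intro x
    exact hcont.comp (Continuous.continuousOn (continuous_id.prodMk (continuous_const.prodMk continuous_const))) (fun t ht => ht)
  have contw : ContinuousOn w (Ici 0) := (contTraj u₀).sub (contTraj v)
  set L := (fun p : H × H => p.1 - p.2) '' (K ×ˢ K) with hL
  have hLcomp : IsCompact L := (hK.prod hK).image (by continuity)
  have hwL : ∀ t, 0 ≤ t → w t ∈ L := fun t ht => ⟨(ψ t q u₀, ψ t q v), ⟨hKmem t ht, hvK t ht⟩, rfl⟩
  obtain ⟨M, hM⟩ := isBounded_iff_forall_norm_le.mp hLcomp.isBounded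
  have hM0 : 0 ≤ M := le_trans (norm_nonneg _) (hM _ (hwL 0 le_rfl))
  obtain ⟨MK, hMK⟩ := isBounded_iff_forall_norm_le.mp hK.isBounded
  have hMK0 : 0 ≤ MK := le_trans (norm_nonneg _) (hMK _ (hKmem 0 le_rfl))
  -- uniform continuity
  have unif : ∀ ε > 0, ∃ η > 0, ∀ t, 0 ≤ t → ∀ s ∈ Icc (0:ℝ) η, ‖w (t+s) - w t‖ ≤ ε := by
    intro ε hε
    set C : Set (ℝ × AddCircle σ × H) := Icc (0:ℝ) σ ×ˢ ((univ : Set (AddCircle σ)) ×ˢ K)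
      with hC
    have hCcomp : IsCompact C := isCompact_Icc.prod (isCompact_univ.prod hK)
    have hΨcont : ContinuousOn (fun p : ℝ × AddCircle σ × H => ψ p.1 p.2.1 p.2.2) C :=
      hcont.mono (fun p hp => hp.1.1)
    have hUC := hCcomp.uniformContinuousOn_of_continuous hΨcont
    rw [Metric.uniformContinuousOn_iff] at hUC
    obtain ⟨η, hη, hUC⟩ := hUC (ε/2) (by positivity)
    refine ⟨min (η/2) σ, by positivity, ?_⟩
    intro t ht s hs
    have hs0 : 0 ≤ s := hs.1
    have hsσ : s ≤ σ := le_trans hs.2 (min_le_right _ _)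
    have hsη : s < η := lt_of_le_of_lt (le_trans hs.2 (min_le_left _ _)) (by linarith)
    have hstep : ∀ x : H, x ∈ K →
        dist (ψ s (q + (t : AddCircle σ)) x) x < ε/2 := by
      intro x hx
      have hp1 : ((s, (q + (t : AddCircle σ), x)) : ℝ × AddCircle σ × H) ∈ C :=
        ⟨⟨hs0, hsσ⟩, ⟨trivial, hx⟩⟩
      have hp2 : (((0:ℝ), (q + (t : AddCircle σ), x)) : ℝ × AddCircle σ × H) ∈ C :=
        ⟨⟨le_rfl, hσ.le⟩, ⟨trivial, hx⟩⟩
      have hd : dist ((s, (q + (t : AddCircle σ), x)) : ℝ × AddCircle σ × H)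
          (((0:ℝ), (q + (t : AddCircle σ), x)) : ℝ × AddCircle σ × H) < η := by
        rw [Prod.dist_eq]
        simp only [Prod.dist_eq, dist_self]
        rw [Real.dist_eq, sub_zero, abs_of_nonneg hs0]
        simp [hsη, lt_of_le_of_lt hs0 hsη]
      have := hUC _ hp1 _ hp2 hd
      simpa [hψ0] using this
    have e1 : ψ (t+s) q u₀ = ψ s (q + (t : AddCircle σ)) (ψ t q u₀) := by
      rw [show t + s = s + t by ring, hcocycle s t hs0 ht q u₀]
    have e2 : ψ (t+s) q v = ψ s (q + (t : AddCircle σ)) (ψ t q v) := by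
      rw [show t + s = s + t by ring, hcocycle s t hs0 ht q v]
    have d1 := hstep (ψ t q u₀) (hKmem t ht)
    have d2 := hstep (ψ t q v) (hvK t ht)
    rw [dist_eq_norm] at d1 d2
    have hrw : w (t+s) - w t
        = (ψ s (q + (t : AddCircle σ)) (ψ t q u₀) - ψ t q u₀)
          - (ψ s (q + (t : AddCircle σ)) (ψ t q v) - ψ t q v) := by
      simp only [hw, e1, e2]; abel
    rw [hrw]
    calc ‖_ - _‖ ≤ ‖_‖ + ‖_‖ := norm_sub_le _ _
      _ ≤ ε := by linarith
  -- Lyapunov function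
  set g : ℝ → ℝ := fun t => Real.exp (2*ν*t) * ⟪P (w t), w t⟫ with hg
  have hwnorm2cont : ContinuousOn (fun s => ‖w s‖^2) (Ici 0) := (contw.norm).pow 2
  have hφcont : ContinuousOn (fun s => Real.exp (2*ν*s) * ‖w s‖^2) (Ici 0) :=
    ((Real.continuous_exp.comp (continuous_const.mul continuous_id)).continuousOn).mul hwnorm2cont
  have h3w : ∀ l r, 0 ≤ l → l ≤ r →
      g r - g l ≤ -δ * ∫ s in l..r, Real.exp (2*ν*s) * ‖w s‖^2 := by
    intro l r hl hlr
    exact h3' q u₀ v l r hl hlr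
  have hIntw : ∀ x y, 0 ≤ x → 0 ≤ y →
      IntervalIntegrable (fun s => Real.exp (2*ν*s) * ‖w s‖^2) volume x y := by
    intro x y hx hy
    exact (hφcont.mono (fun z hz => le_trans (le_min hx hy) hz.1)).intervalIntegrable
  have hIntw2 : ∀ x y, 0 ≤ x → 0 ≤ y →
      IntervalIntegrable (fun s => ‖w s‖^2) volume x y := by
    intro x y hx hy
    exact (hwnorm2cont.mono (fun z hz => le_trans (le_min hx hy) hz.1)).intervalIntegrable
  have gmono : ∀ l r, 0 ≤ l → l ≤ r → g r ≤ g l := by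
    intro l r hl hlr
    have h1 := h3w l r hl hlr
    have h2 : 0 ≤ ∫ s in l..r, Real.exp (2*ν*s) * ‖w s‖^2 :=
      intervalIntegral.integral_nonneg hlr (fun x _ => by positivity)
    nlinarith
  -- reduce goal to w
  suffices hwten : Tendsto w atTop (𝓝 0) by
    apply hwten.congr'
    filter_upwards [eventually_ge_atTop (0:ℝ)] with t ht
    simp only [hw]
    rw [key t ht]
  by_cases hcase : ∀ t, 0 ≤ t → 0 ≤ (⟪P (w t), w t⟫ : ℝ)
  · -- Case 1
    have hbound : ∀ T, 0 ≤ T → (∫ s in (0:ℝ)..T, ‖w s‖^2) ≤ g 0 / δ := by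
      intro T hT
      have h1 := h3w 0 T le_rfl hT
      have hgT : 0 ≤ g T := mul_nonneg (Real.exp_pos _).le (hcase T hT)
      have hI2 : (∫ s in (0:ℝ)..T, ‖w s‖^2) ≤ ∫ s in (0:ℝ)..T, Real.exp (2*ν*s) * ‖w s‖^2 := by
        apply intervalIntegral.integral_mono_on hT (hIntw2 0 T le_rfl hT) (hIntw 0 T le_rfl hT)
        intro x hx
        have h1x : (1:ℝ) ≤ Real.exp (2*ν*x) := Real.one_le_exp (by nlinarith [hx.1])
        nlinarith [sq_nonneg ‖w x‖]
      have hIle : (∫ s in (0:ℝ)..T, Real.exp (2*ν*s) * ‖w s‖^2) ≤ g 0 / δ := by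
        rw [le_div_iff₀ hδ]
        nlinarith
      linarith
    have hsq : Tendsto (fun t => ‖w t‖^2) atTop (𝓝 0) := by
      apply aux_tendsto_zero 0 _ hwnorm2cont (fun t ht => by positivity) (g 0 / δ) hbound
      intro ε hε
      obtain ⟨η, hη, hu⟩ := unif (min 1 (ε / (2*M+2))) (by positivity)
      refine ⟨η, hη, ?_⟩
      intro t ht s hs
      have h1 := hu t ht s hs
      have h2 : ‖w t‖ ≤ ‖w (t+s)‖ + min 1 (ε/(2*M+2)) := by
        have h3 := norm_sub_norm_le (w t) (w (t+s))
        rw [norm_sub_rev (w t)] at h3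
        linarith
      have hM1 : ‖w (t+s)‖ ≤ M := hM _ (hwL (t+s) (by linarith [hs.1]))
      have hmin1 : min 1 (ε/(2*M+2)) ≤ 1 := min_le_left _ _
      have hmin2 : min 1 (ε/(2*M+2)) ≤ ε/(2*M+2) := min_le_right _ _
      have hmin0 : 0 ≤ min 1 (ε/(2*M+2)) := le_min zero_le_one (by positivity)
      have key1 : ‖w t‖^2 ≤ (‖w (t+s)‖ + min 1 (ε/(2*M+2)))^2 :=
        pow_le_pow_left₀ (norm_nonneg _) h2 2
      have key2 : (‖w (t+s)‖ + min 1 (ε/(2*M+2)))^2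
          = ‖w (t+s)‖^2 + min 1 (ε/(2*M+2)) * (2*‖w (t+s)‖ + min 1 (ε/(2*M+2))) := by ring
      have key3 : min 1 (ε/(2*M+2)) * (2*‖w (t+s)‖ + min 1 (ε/(2*M+2)))
          ≤ min 1 (ε/(2*M+2)) * (2*M+2) :=
        mul_le_mul_of_nonneg_left (by linarith) hmin0
      have key4 : min 1 (ε/(2*M+2)) * (2*M+2) ≤ ε :=
        (le_div_iff₀ (by linarith : (0:ℝ) < 2*M+2)).mp hmin2
      linarith
    rw [tendsto_zero_iff_norm_tendsto_zero]
    have : Tendsto (fun t => Real.sqrt (‖w t‖^2)) atTop (𝓝 (Real.sqrt 0)) :=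
      (Real.continuous_sqrt.tendsto 0).comp hsq
    simpa [Real.sqrt_sq (norm_nonneg _)] using this
  · -- Case 2
    push_neg at hcase
    obtain ⟨t₀, ht₀, hVneg⟩ := hcase
    -- pick a unit vector spanning Hminus
    have hpos : 0 < Module.finrank ℝ Hminus := by rw [hrank]; norm_num
    obtain ⟨e0, he0m, he0⟩ : ∃ e0 : H, e0 ∈ Hminus ∧ e0 ≠ 0 := by
      obtain ⟨x, hx⟩ := Submodule.nonzero_mem_of_bot_lt
        (show ⊥ < Hminus by
          rcases eq_or_lt_of_le (bot_le : ⊥ ≤ Hminus) with heq | hlt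
          · exfalso
            rw [← heq] at hrank
            simp at hrank
          · exact hlt)
      exact ⟨(x : H), x.2, by simpa using hx⟩
    set e : H := ‖e0‖⁻¹ • e0 with he
    have hem : e ∈ Hminus := Hminus.smul_mem _ he0m
    have hnorme : ‖e‖ = 1 := by
      rw [he, norm_smul, norm_inv, norm_norm]
      exact inv_mul_cancel₀ (norm_ne_zero_iff.mpr he0)
    have heneq : e ≠ 0 := by
      intro hcontra
      rw [hcontra, norm_zero] at hnorme
      norm_num at hnorme
    have hspan : Hminus = Submodule.span ℝ {e} := by
      symm
      apply Submodule.eq_of_le_of_finrank_le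
      · rw [Submodule.span_le, Set.singleton_subset_iff]; exact hem
      · rw [hrank, finrank_span_singleton heneq]
    haveI : CompleteSpace Hplus := h1closed.completeSpace_coe
    have horth : Hminusᗮ = Hplus := by
      rw [h1orth, Submodule.orthogonal_orthogonal]
    have hVplus : ∀ x ∈ Hplus, 0 ≤ (⟪P x, x⟫ : ℝ) := by
      intro x hx
      rcases eq_or_ne x 0 with rfl | hx0
      · simp
      · exact (h1pos x hx hx0).le
    have hperp : ∀ x : H, (⟪e, x⟫ : ℝ) = 0 → x ∈ Hplus := by
      intro x hex
      rw [← horth]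
      rw [hspan]
      rw [Submodule.mem_orthogonal]
      intro y hy
      obtain ⟨a, rfl⟩ := Submodule.mem_span_singleton.mp hy
      rw [real_inner_smul_left, hex, mul_zero]
    have hsignlem : ∀ x : H, (⟪P x, x⟫ : ℝ) < 0 → (⟪e, x⟫ : ℝ) ≠ 0 := by
      intro x hV hex
      exact absurd (hVplus x (hperp x hex)) (not_le.mpr hV)
    have hgneg : g t₀ < 0 := mul_neg_of_pos_of_neg (Real.exp_pos _) hVneg
    have hVlt : ∀ t, t₀ ≤ t → (⟪P (w t), w t⟫ : ℝ) < 0 := by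
      intro t ht
      have h1 : g t ≤ g t₀ := gmono t₀ t ht₀ ht
      have h2 : Real.exp (2*ν*t) * (⟪P (w t), w t⟫ : ℝ) < 0 := lt_of_le_of_lt h1 hgneg
      by_contra hge
      push_neg at hge
      exact absurd h2 (not_lt.mpr (mul_nonneg (Real.exp_pos _).le hge))
    set c : ℝ := if 0 < (⟪e, w t₀⟫ : ℝ) then 1 else -1 with hc
    have hcc : c * c = 1 := by rw [hc]; split_ifs <;> norm_num
    have hcabs : |c| = 1 := by rw [hc]; split_ifs <;> norm_num
    have hct₀ : 0 < c * (⟪e, w t₀⟫ : ℝ) := by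
      have hne0 := hsignlem _ (hVlt t₀ le_rfl)
      rw [hc]
      split_ifs with hpos'
      · linarith
      · push_neg at hpos'
        have : (⟪e, w t₀⟫ : ℝ) < 0 := lt_of_le_of_ne hpos' hne0
        nlinarith
    set lw : ℝ → ℝ := fun t => c * (⟪e, w t⟫ : ℝ) with hlw
    have hlwcont : ContinuousOn lw (Ici 0) :=
      continuousOn_const.mul ((continuous_const.inner continuous_id).comp_continuousOn contw)
    have hsign : ∀ t, t₀ ≤ t → 0 < lw t := by
      intro t ht
      by_contra hle
      push_neg at hle
      have hne1 : lw t ≠ 0 := by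
        have h0 := hsignlem _ (hVlt t ht)
        simp only [hlw]
        intro hzero
        rcases mul_eq_zero.mp hzero with hc0 | hi0
        · rw [hc0] at hcabs; norm_num at hcabs
        · exact h0 hi0
      have hlt : lw t < 0 := lt_of_le_of_ne hle hne1
      have hcl : ContinuousOn lw (Icc t₀ t) :=
        hlwcont.mono (fun x hx => le_trans ht₀ hx.1)
      have hsub := intermediate_value_Icc' ht hcl
      have h0mem : (0:ℝ) ∈ Icc (lw t) (lw t₀) := ⟨hlt.le, hct₀.le⟩
      obtain ⟨t₂, ht₂, h0⟩ := hsub h0mem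
      have h0' : (⟪e, w t₂⟫ : ℝ) = 0 := by
        have := hsignlem _ (hVlt t₂ ht₂.1)
        rcases mul_eq_zero.mp h0 with hc0 | hi0
        · rw [hc0] at hcabs; norm_num at hcabs
        · exact hi0
      exact hsignlem _ (hVlt t₂ ht₂.1) h0'
    -- f along the trajectory
    set f : ℝ → ℝ := fun t => c * (⟪e, ψ t q u₀⟫ : ℝ) with hf
    have hfcont : ContinuousOn f (Ici 0) :=
      continuousOn_const.mul ((continuous_const.inner continuous_id).comp_continuousOn (contTraj u₀))
    have hfint : ∀ x y, 0 ≤ x → 0 ≤ y → IntervalIntegrable f volume x y := by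
      intro x y hx hy
      exact (hfcont.mono (fun z hz => le_trans (le_min hx hy) hz.1)).intervalIntegrable
    have hfbd : ∀ t, 0 ≤ t → |f t| ≤ MK := by
      intro t ht
      rw [hf]
      simp only
      rw [abs_mul, hcabs, one_mul]
      calc |(⟪e, ψ t q u₀⟫ : ℝ)| ≤ ‖e‖ * ‖ψ t q u₀‖ := abs_real_inner_le_norm _ _
        _ = ‖ψ t q u₀‖ := by rw [hnorme, one_mul]
        _ ≤ MK := hMK _ (hKmem t ht)
    have hlwint : ∀ x y, t₀ ≤ x → t₀ ≤ y → IntervalIntegrable lw volume x y := by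
      intro x y hx hy
      exact (hlwcont.mono (fun z hz =>
        le_trans ht₀ (le_trans (le_min hx hy) hz.1))).intervalIntegrable
    have hrel : ∀ s, 0 ≤ s → lw s = f s - f (s + σ) := by
      intro s hs
      simp only [hlw, hf, hw]
      rw [key s hs, inner_sub_right]
      ring
    have hFbd : ∀ T, t₀ ≤ T → (∫ s in t₀..T, lw s) ≤ 2*σ*MK := by
      intro T hT
      have hT0 : 0 ≤ T := ht₀.trans hT
      have e1 : ∫ s in t₀..T, lw s = (∫ s in t₀..T, f s) - ∫ s in t₀..T, f (s+σ) := by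
        rw [← intervalIntegral.integral_sub (hfint t₀ T ht₀ hT0) ?_]
        · apply intervalIntegral.integral_congr
          intro s hs
          rw [uIcc_of_le hT] at hs
          exact hrel s (le_trans ht₀ hs.1)
        · have h' := (hfint (t₀+σ) (T+σ) (by linarith) (by linarith)).comp_add_right σ
          simpa using h'
      have e2 : (∫ s in t₀..T, f (s+σ)) = ∫ s in (t₀+σ)..(T+σ), f s :=
        intervalIntegral.integral_comp_add_right f σ
      have a1 : (∫ s in t₀..(t₀+σ), f s) + (∫ s in (t₀+σ)..T, f s) = ∫ s in t₀..T, f s :=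
        intervalIntegral.integral_add_adjacent_intervals
          (hfint t₀ (t₀+σ) ht₀ (by linarith)) (hfint (t₀+σ) T (by linarith) hT0)
      have a2 : (∫ s in (t₀+σ)..T, f s) + (∫ s in T..(T+σ), f s) = ∫ s in (t₀+σ)..(T+σ), f s :=
        intervalIntegral.integral_add_adjacent_intervals
          (hfint (t₀+σ) T (by linarith) hT0) (hfint T (T+σ) hT0 (by linarith))
      have b1 : |∫ s in t₀..(t₀+σ), f s| ≤ MK * σ := by
        have := intervalIntegral.norm_integral_le_of_norm_le_const (C := MK) (a := t₀)
          (b := t₀+σ) (f := f) ?_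
        · rw [show t₀ + σ - t₀ = σ by ring, abs_of_pos hσ] at this
          exact this
        · intro x hx
          rw [uIoc_of_le (by linarith)] at hx
          exact hfbd x (le_trans ht₀ hx.1.le)
      have b2 : |∫ s in T..(T+σ), f s| ≤ MK * σ := by
        have := intervalIntegral.norm_integral_le_of_norm_le_const (C := MK) (a := T)
          (b := T+σ) (f := f) ?_
        · rw [show T + σ - T = σ by ring, abs_of_pos hσ] at this
          exact this
        · intro x hx
          rw [uIoc_of_le (by linarith)] at hx
          exact hfbd x (le_trans hT0 hx.1.le)
      have habs1 := abs_le.mp b1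
      have habs2 := abs_le.mp b2
      rw [e1, e2]
      nlinarith
    -- apply aux lemma to lw
    have hlwten : Tendsto lw atTop (𝓝 0) := by
      apply aux_tendsto_zero t₀ lw (hlwcont.mono (fun z hz => le_trans ht₀ hz)) 
        (fun t ht => (hsign t ht).le) (2*σ*MK) hFbd
      intro ε hε
      obtain ⟨η, hη, hu⟩ := unif ε hε
      refine ⟨η, hη, ?_⟩
      intro t ht s hs
      have h1 := hu t (ht₀.trans ht) s hs
      have h2 : |lw (t+s) - lw t| ≤ ‖w (t+s) - w t‖ := by
        simp only [hlw]
        rw [← mul_sub, abs_mul, hcabs, one_mul, ← inner_sub_right]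
        calc |(⟪e, w (t+s) - w t⟫ : ℝ)| ≤ ‖e‖ * ‖w (t+s) - w t‖ := abs_real_inner_le_norm _ _
          _ = ‖w (t+s) - w t‖ := by rw [hnorme, one_mul]
      have := abs_le.mp (le_trans h2 h1)
      linarith [this.1]
    have hinner0 : Tendsto (fun t => (⟪e, w t⟫ : ℝ)) atTop (𝓝 0) := by
      have := hlwten.const_mul c
      rw [mul_zero] at this
      apply this.congr
      intro t
      have hrfl : c * lw t = c * (c * (⟪e, w t⟫ : ℝ)) := rfl
      rw [hrfl, ← mul_assoc, hcc, one_mul]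
    -- endgame
    rw [Metric.tendsto_atTop]
    by_contra hcon
    push_neg at hcon
    obtain ⟨ε, hε, hcon⟩ := hcon
    choose tt htt hda using fun n : ℕ => hcon (max (n:ℝ) t₀)
    have httn : ∀ n : ℕ, (n:ℝ) ≤ tt n := fun n => le_trans (le_max_left _ _) (htt n)
    have htt0 : ∀ n, t₀ ≤ tt n := fun n => le_trans (le_max_right _ _) (htt n)
    have hmem : ∀ n, w (tt n) ∈ L := fun n => hwL _ (ht₀.trans (htt0 n))
    obtain ⟨x, hxL, φ, hφ, hconv⟩ := hLcomp.tendsto_subseq hmem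
    have httop : Tendsto (fun n => tt (φ n)) atTop atTop := by
      apply tendsto_atTop_mono (fun n => le_trans (Nat.cast_le.mpr (hφ.id_le n)) (httn (φ n)))
      exact tendsto_natCast_atTop_atTop
    have h1' : Tendsto (fun n => (⟪e, w (tt (φ n))⟫ : ℝ)) atTop (𝓝 0) := hinner0.comp httop
    have h2' : Tendsto (fun n => (⟪e, w (tt (φ n))⟫ : ℝ)) atTop (𝓝 (⟪e, x⟫ : ℝ)) :=
      ((continuous_const.inner continuous_id).tendsto x).comp hconv
    have hex : (⟪e, x⟫ : ℝ) = 0 := tendsto_nhds_unique h2' h1'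
    have h3' : Tendsto (fun n => (⟪P (w (tt (φ n))), w (tt (φ n))⟫ : ℝ)) atTop
        (𝓝 (⟪P x, x⟫ : ℝ)) :=
      ((P.continuous.inner continuous_id).tendsto x).comp hconv
    have hVx : (⟪P x, x⟫ : ℝ) ≤ 0 :=
      le_of_tendsto h3' (Eventually.of_forall fun n => (hVlt _ (htt0 (φ n))).le)
    have hx0 : x = 0 := by
      have hxm : x ∈ Hplus := hperp x hex
      by_contra hne0
      exact absurd hVx (not_le.mpr (h1pos x hxm hne0))
    have hnx : ε ≤ ‖x‖ := by
      apply ge_of_tendsto ((continuous_norm.tendsto x).comp hconv)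
      apply Eventually.of_forall
      intro n
      have := hda (φ n)
      rw [dist_zero_right] at this
      exact this
    rw [hx0, norm_zero] at hnx
    linarith
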